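/- Let G = (V, E) be a finite strongly connected digraph (E ⊆ V × V, and for all u, v ∈ V there is a directed walk of positive length from u to v) whose period — the greatest common divisor of the lengths of all closed directed walks in G — equals t, and suppose there is a surjective map P : V → ℤ/tℤ such that (v,w) ∈ E implies P(w) = P(v) + 1. Let ≈ be an equivalence relation on V each of whose classes is contained in a single fiber of P (x ≈ y implies P(x) = P(y)), and let Q be the quotient digraph on the set of equivalence classes, with an edge from class [u] to class [v] if and only if there exist u' ≈ u and v' ≈ v with (u',v') ∈ E. Then the greatest common divisor of the lengths of all closed directed walks in Q also equals t. -/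
import Mathlib


/-- `walkN E m u v` : there is a directed walk of length `m` from `u` to `v`
in the digraph with edge relation `E`. -/
def walkN {α : Type*} (E : α → α → Prop) : ℕ → α → α → Prop
  | 0, u, v => u = v
  | m + 1, u, v => ∃ w, E u w ∧ walkN E m w v

/-- The edge relation of the quotient digraph: there is an edge from class `a`
to class `b` iff there are representatives `u` of `a` and `v` of `b` with an
edge `(u, v)` in the original digraph. -/
def quotEdge {V : Type*} (s : Setoid V) (E : V → V → Prop) :
    Quotient s → Quotient s → Prop :=
  fun a b => ∃ u v : V, E u v ∧ Quotient.mk s u = a ∧ Quotient.mk s v = b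

/-- If `G` is a finite strongly connected digraph of period `t` (the gcd of the
lengths of its closed walks), with periodic partition `P : V → ℤ/tℤ`, and `≈` is
an equivalence relation refining the periodic partition, then the quotient
digraph also has period `t`. -/
theorem period_quotient_eq_period {V : Type} [Fintype V] [Nonempty V]
    (E : V → V → Prop)
    (hsc : ∀ u v : V, ∃ m : ℕ, 1 ≤ m ∧ walkN E m u v)
    (t : ℕ)
    (hdvd : ∀ m : ℕ, 1 ≤ m → (∃ v : V, walkN E m v v) → t ∣ m)
    (hgcd : ∀ s : ℕ, (∀ m : ℕ, 1 ≤ m → (∃ v : V, walkN E m v v) → s ∣ m) → s ∣ t)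
    (P : V → ZMod t) (hPsurj : Function.Surjective P)
    (hPE : ∀ v w : V, E v w → P w = P v + 1)
    (s : Setoid V) (hs : ∀ x y : V, s.r x y → P x = P y) :
    (∀ m : ℕ, 1 ≤ m → (∃ a : Quotient s, walkN (quotEdge s E) m a a) → t ∣ m) ∧
    (∀ r : ℕ, (∀ m : ℕ, 1 ≤ m →
        (∃ a : Quotient s, walkN (quotEdge s E) m a a) → r ∣ m) → r ∣ t) := by

  classical
  obtain ⟨v0⟩ := (inferInstance : Nonempty V)
  obtain ⟨m0, hm0, hw0⟩ := hsc v0 v0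
  have ht : t ≠ 0 := by
    intro h
    have hd := hdvd m0 hm0 ⟨v0, hw0⟩
    rw [h, zero_dvd_iff] at hd
    omega
  haveI : NeZero t := ⟨ht⟩
  have key : ∀ m (a b : Quotient s), walkN (quotEdge s E) m a b →
      Quotient.lift P hs b = Quotient.lift P hs a + (m : ZMod t) := by
    intro m
    induction m with
    | zero =>
      intro a b h
      have hab : a = b := h
      subst hab; simp
    | succ n ih =>
      intro a b h
      obtain ⟨c, hac, hcb⟩ := h
      obtain ⟨u, v, huv, hu, hv⟩ := hac
      have h1 := ih c b hcb
      have h2 : Quotient.lift P hs c = Quotient.lift P hs a + 1 := by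
        subst hu; subst hv
        simpa using hPE u v huv
      rw [h1, h2]
      push_cast
      ring
  have proj : ∀ m (u v : V), walkN E m u v →
      walkN (quotEdge s E) m (Quotient.mk s u) (Quotient.mk s v) := by
    intro m
    induction m with
    | zero => intro u v h; exact congrArg _ h
    | succ n ih =>
      intro u v h
      obtain ⟨w, huw, hwv⟩ := h
      exact ⟨Quotient.mk s w, ⟨u, w, huw, rfl, rfl⟩, ih w v hwv⟩
  constructor
  · intro m hm ⟨a, hw⟩
    have := key m a a hw
    have hz : (m : ZMod t) = 0 := by linear_combination -this
    exact (ZMod.natCast_eq_zero_iff m t).mp hz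
  · intro r hr
    apply hgcd
    intro m hm ⟨v, hw⟩
    exact hr m hm ⟨Quotient.mk s v, proj m v v hw⟩
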